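/- Let G ⊆ H be a dense extension of ordered abelian groups equipped with their natural (archimedean) valuations, and suppose the value set of G has no last element (i.e., for every positive g ∈ G there is a positive c ∈ G with c archimedean-strictly-smaller than g, meaning n·c < g for all n ∈ ℕ). Then for every a ∈ H \ {0} there exists b ∈ G such that a − b is archimedean-strictly-smaller than a (i.e., n·|a − b| < |a| for all n ∈ ℕ). -/

import Mathlib

lemma stmt_2_pos {H : Type*} [AddCommGroup H] [LinearOrder H] [IsOrderedAddMonoid H] (G : AddSubgroup H)
    (hdense : ∀ a b : H, a < b → ∃ c ∈ G, a < c ∧ c < b)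
    (hnolast : ∀ g ∈ G, 0 < g → ∃ c ∈ G, 0 < c ∧ ∀ n : ℕ, n • c < g) :
    ∀ a : H, 0 < a → ∃ b ∈ G, ∀ n : ℕ, n • |a - b| < |a| := by
  intro a ha
  obtain ⟨g, hgG, hg0, hga⟩ := hdense 0 a ha
  obtain ⟨c, hcG, hc0, hcn⟩ := hnolast g hgG hg0
  obtain ⟨b, hbG, hb1, hb2⟩ := hdense (a - c) a (sub_lt_self a hc0)
  refine ⟨b, hbG, fun n => ?_⟩
  have habs : |a - b| < c := by
    rw [abs_of_pos (sub_pos.mpr hb2)]; exact sub_lt_comm.mpr hb1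
  have : n • |a - b| ≤ n • c := nsmul_le_nsmul_right habs.le n
  calc n • |a - b| ≤ n • c := this
    _ < g := hcn n
    _ < |a| := by rw [abs_of_pos ha]; exact hga

/-- Let `G ⊆ H` be a dense extension of ordered abelian groups whose value set (for the
natural/archimedean valuation) has no last element; then for every nonzero `a ∈ H` there is
`b ∈ G` such that `a - b` is archimedean-strictly-smaller than `a`. -/
theorem stmt_2 {H : Type*} [AddCommGroup H] [LinearOrder H] [IsOrderedAddMonoid H] (G : AddSubgroup H)
    (hdense : ∀ a b : H, a < b → ∃ c ∈ G, a < c ∧ c < b)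
    (hnolast : ∀ g ∈ G, 0 < g → ∃ c ∈ G, 0 < c ∧ ∀ n : ℕ, n • c < g) :
    ∀ a : H, a ≠ 0 → ∃ b ∈ G, ∀ n : ℕ, n • |a - b| < |a| := by
  intro a ha
  rcases ha.lt_or_gt with h | h
  · obtain ⟨b, hbG, hb⟩ := stmt_2_pos G hdense hnolast (-a) (neg_pos.mpr h)
    refine ⟨-b, neg_mem hbG, fun n => ?_⟩
    have := hb n
    rwa [show -a - b = -(a - -b) by abel, abs_neg, abs_neg] at this
  · exact stmt_2_pos G hdense hnolast a h
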